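/- Let k ≥ 2 and let T be a tree with a leaf u such that no leaf of T belongs to N_{k+1}[u] ∖ {u}. Then mdi_k(T ∖ u) < mdi_k(T), where T ∖ u is the tree obtained from T by deleting u. -/

import Mathlib

/-- `J` is a distance-`k` independent set in `G`: any two distinct vertices of `J`
are at graph distance at least `k + 1`. -/
def DkIndep {V : Type*} (G : SimpleGraph V) (k : ℕ) (J : Set V) : Prop :=
  ∀ ⦃u⦄, u ∈ J → ∀ ⦃v⦄, v ∈ J → u ≠ v → k + 1 ≤ G.dist u v

/-- `J` is a maximal distance-`k` independent set (`k`-MDIS) of `G`. -/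
def MaxDkIndep {V : Type*} (G : SimpleGraph V) (k : ℕ) (J : Set V) : Prop :=
  DkIndep G k J ∧ ∀ J', DkIndep G k J' → J ⊆ J' → J' = J

/-- `mdi G k` is the number of maximal distance-`k` independent sets of `G`. -/
noncomputable def mdi {V : Type*} (G : SimpleGraph V) (k : ℕ) : ℕ :=
  {J : Set V | MaxDkIndep G k J}.ncard

/-- `f_k(n)` from the paper. -/
def fk (k n : ℕ) : ℕ :=
  if n ≤ k + 1 then n else n - (n - k % 2) / (k / 2 + 1) + 1

/-- closed ball `N_k[x]`. -/
def ball {V : Type*} (G : SimpleGraph V) (k : ℕ) (x : V) : Set V :=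
  {v | G.dist x v ≤ k}

/-- a leaf is a vertex of degree 1. -/
def IsLeaf {V : Type*} (G : SimpleGraph V) (v : V) : Prop :=
  (G.neighborSet v).ncard = 1

/-- eccentricity of a vertex. -/
noncomputable def ecc {V : Type*} [Fintype V] (G : SimpleGraph V) (v : V) : ℕ :=
  Finset.univ.sup (G.dist v)

/-- diameter of a finite graph. -/
noncomputable def gdiam {V : Type*} [Fintype V] (G : SimpleGraph V) : ℕ :=
  Finset.univ.sup (ecc G)

/-- a central vertex is one of minimum eccentricity. -/
def IsCentral {V : Type*} [Fintype V] (G : SimpleGraph V) (v : V) : Prop :=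
  ∀ u, ecc G v ≤ ecc G u

/-- a `k`-twin: some other vertex has the same closed `k`-ball. -/
def KTwin {V : Type*} (G : SimpleGraph V) (k : ℕ) (u : V) : Prop :=
  ∃ v, v ≠ u ∧ ball G k u = ball G k v

/-- a diametral leaf: a leaf whose eccentricity equals the diameter. -/
def IsDiametralLeaf {V : Type*} [Fintype V] (G : SimpleGraph V) (u : V) : Prop :=
  IsLeaf G u ∧ ecc G u = gdiam G

/-- a `k`-special pair. -/
def KSpecial {V : Type*} [Fintype V] (G : SimpleGraph V) (k : ℕ) (x y : V) : Prop :=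
  IsDiametralLeaf G x ∧ IsDiametralLeaf G y ∧ KTwin G k x ∧ KTwin G k y ∧
    ball G k x ≠ ball G k y

/-- `mdi*_k(G, ℓ)`. -/
noncomputable def mdiStar {V : Type*} (G : SimpleGraph V) (k : ℕ) (ℓ : V) : ℕ :=
  {J : Set V | MaxDkIndep G k J ∧ ℓ ∈ J ∧ ∃ w ∉ J, ball G k w ∩ J = {ℓ}}.ncard

/-- The spider tree `S_{p,m}`: a center (`none`) together with `p` legs of `m` vertices. -/
def spider (p m : ℕ) : SimpleGraph (Option (Fin p × Fin m)) :=
  SimpleGraph.fromRel fun a b =>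
    match a, b with
    | none, some (_, j) => (j : ℕ) = 0
    | some (i, j), some (i', j') => i = i' ∧ (j : ℕ) + 1 = (j' : ℕ)
    | _, _ => False

/-- `S'_{p,m}`: the spider `S_{p,m}` with one leaf at distance `m` from the center removed. -/
def spider' (p m : ℕ) (hp : 0 < p) (hm : 0 < m) :=
  (spider p m).induce
    {v | v ≠ some (⟨0, hp⟩, ⟨m - 1, Nat.sub_lt hm Nat.one_pos⟩)}

/-- The double spider `B_{p₁,p₂,s}`: two adjacent centers (`Sum.inl false`, `Sum.inl true`),
with `p₁` legs of `s` vertices on the first and `p₂` legs of `s` vertices on the second. -/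
def btree (p₁ p₂ s : ℕ) : SimpleGraph (Bool ⊕ ((Fin p₁ ⊕ Fin p₂) × Fin s)) :=
  SimpleGraph.fromRel fun a b =>
    match a, b with
    | Sum.inl x, Sum.inl y => x ≠ y
    | Sum.inl false, Sum.inr (Sum.inl _, j) => (j : ℕ) = 0
    | Sum.inl true, Sum.inr (Sum.inr _, j) => (j : ℕ) = 0
    | Sum.inr (c, j), Sum.inr (c', j') => c = c' ∧ (j : ℕ) + 1 = (j' : ℕ)
    | _, _ => False

/-- `G` contains a subgraph isomorphic to `H`. -/
def ContainsSub {V W : Type*} (G : SimpleGraph V) (H : SimpleGraph W) : Prop :=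
  ∃ f : W → V, Function.Injective f ∧ ∀ a b, H.Adj a b → G.Adj (f a) (f b)

/-- A pendant path on `s` vertices `P 0, …, P (s-1)` attached to `w`:
`P 0` is a leaf, consecutive vertices are adjacent, interior vertices have degree 2,
and `P (s-1)` is adjacent to `w`. -/
def IsPendantPath {V : Type*} (T : SimpleGraph V) (s : ℕ) (P : ℕ → V) (w : V) : Prop :=
  Set.InjOn P (Set.Iio s) ∧ (∀ i < s, P i ≠ w) ∧ IsLeaf T (P 0) ∧
    (∀ i, i + 1 < s → T.Adj (P i) (P (i + 1))) ∧
    (∀ i, 0 < i → i < s → (T.neighborSet (P i)).ncard = 2) ∧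
    T.Adj (P (s - 1)) w

/-- Isomorphism of simple graphs on `Fin n` as a setoid. -/
def graphSetoid (n : ℕ) : Setoid (SimpleGraph (Fin n)) where
  r G H := Nonempty (G ≃g H)
  iseqv := ⟨fun _ => ⟨SimpleGraph.Iso.refl⟩, fun ⟨e⟩ => ⟨e.symm⟩, fun ⟨e⟩ ⟨f⟩ => ⟨e.trans f⟩⟩

/-- The number of isomorphism classes of graphs in a set of graphs on `Fin n`. -/
noncomputable def numIsoClasses {n : ℕ} (S : Set (SimpleGraph (Fin n))) : ℕ :=
  ((fun G => Quotient.mk (graphSetoid n) G) '' S).ncard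

section aux

lemma dk_mono {V : Type*} {G : SimpleGraph V} {k : ℕ} {I J : Set V}
    (hJ : DkIndep G k J) (hIJ : I ⊆ J) : DkIndep G k I :=
  fun _ ha _ hb hab => hJ (hIJ ha) (hIJ hb) hab

lemma exists_maximal_family {α : Type*} [Finite α] (S : Set (Set α)) (hne : S.Nonempty) :
    ∃ M ∈ S, ∀ X ∈ S, M ⊆ X → X = M := by
  obtain ⟨M, hM, hmax⟩ := Set.Finite.exists_maximalFor id S (Set.toFinite S) hne
  exact ⟨M, hM, fun X hX hMX => Set.Subset.antisymm (hmax hX hMX) hMX⟩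

lemma mem_support_dist_le {V : Type*} {G : SimpleGraph V} {a b x : V} (p : G.Walk a b)
    (hx : x ∈ p.support) : G.dist a x ≤ p.length := by
  classical
  exact le_trans (SimpleGraph.dist_le _) (SimpleGraph.Walk.length_takeUntil_le p hx)

lemma mem_support_dist_lt {V : Type*} {G : SimpleGraph V} {a b x : V} (p : G.Walk a b)
    (hx : x ∈ p.support) (hxb : x ≠ b) : G.dist a x < p.length := by
  classical
  have h1 := congrArg SimpleGraph.Walk.length (p.take_spec hx)
  rw [SimpleGraph.Walk.length_append] at h1
  have h2 : (p.dropUntil x hx).length ≠ 0 := fun h0 =>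
    hxb (SimpleGraph.Walk.eq_of_length_eq_zero h0)
  have h3 := SimpleGraph.dist_le (p.takeUntil x hx)
  omega

lemma adj_layer_ne {V : Type*} {T : SimpleGraph V} (hT : T.IsTree) (u : V) {a b : V}
    (hab : T.Adj a b) : T.dist u a ≠ T.dist u b := by
  intro heq
  obtain ⟨p, hp, hpl⟩ := hT.isConnected.exists_path_of_dist u a
  have hbp : b ∉ p.support := by
    intro hbmem
    have := mem_support_dist_lt p hbmem hab.ne'
    omega
  have hbp' : b ∉ p.reverse.support := by
    rw [SimpleGraph.Walk.support_reverse]; simpa using hbp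
  have hpath : (SimpleGraph.Walk.cons hab.symm p.reverse).IsPath :=
    SimpleGraph.Walk.IsPath.cons hp.reverse hbp'
  obtain ⟨q, hq, hql⟩ := hT.isConnected.exists_path_of_dist u b
  have huniq := hT.IsAcyclic.path_unique
    ⟨(SimpleGraph.Walk.cons hab.symm p.reverse).reverse, hpath.reverse⟩ ⟨q, hq⟩
  have hlen := congrArg (fun r : T.Path u b => (r : T.Walk u b).length) huniq
  simp only [SimpleGraph.Walk.length_reverse, SimpleGraph.Walk.length_cons] at hlen
  omega

lemma exists_parent {V : Type*} {T : SimpleGraph V} (hT : T.IsTree) (u : V) {a : V}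
    (ha : a ≠ u) : ∃ p, T.Adj a p ∧ T.dist u p + 1 = T.dist u a := by
  obtain ⟨w, hw, hwl⟩ := hT.isConnected.exists_path_of_dist u a
  have hpos : 0 < T.dist u a := hT.isConnected.pos_dist_of_ne (Ne.symm ha)
  have hnn : ¬ w.reverse.Nil := by
    rw [SimpleGraph.Walk.nil_iff_length_eq, SimpleGraph.Walk.length_reverse]
    omega
  obtain ⟨x, hadj, q, hq⟩ := SimpleGraph.Walk.not_nil_iff.mp hnn
  have hlq : q.length + 1 = T.dist u a := by
    have := congrArg SimpleGraph.Walk.length hq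
    simp only [SimpleGraph.Walk.length_reverse, SimpleGraph.Walk.length_cons] at this
    omega
  have hdx : T.dist u x ≤ q.length := by
    have h0 := SimpleGraph.dist_le q
    rw [SimpleGraph.dist_comm]
    exact h0
  have htri : T.dist u a ≤ T.dist u x + 1 := by
    have h1 := hT.isConnected.dist_triangle (u := u) (v := x) (w := a)
    have h2 : T.dist x a ≤ 1 := by
      have := SimpleGraph.dist_le (SimpleGraph.Walk.cons hadj.symm SimpleGraph.Walk.nil)
      simpa using this
    omega
  exact ⟨x, hadj, by omega⟩

lemma parent_unique {V : Type*} {T : SimpleGraph V} (hT : T.IsTree) (u : V) {a p₁ p₂ : V}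
    (h1 : T.Adj a p₁) (h2 : T.Adj a p₂)
    (hl1 : T.dist u p₁ + 1 = T.dist u a) (hl2 : T.dist u p₂ + 1 = T.dist u a) : p₁ = p₂ := by
  obtain ⟨q₁, hq₁, hql₁⟩ := hT.isConnected.exists_path_of_dist u p₁
  obtain ⟨q₂, hq₂, hql₂⟩ := hT.isConnected.exists_path_of_dist u p₂
  have ha₁ : a ∉ q₁.reverse.support := by
    rw [SimpleGraph.Walk.support_reverse, List.mem_reverse]
    intro hmem
    have := mem_support_dist_le q₁ hmem
    omega
  have ha₂ : a ∉ q₂.reverse.support := by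
    rw [SimpleGraph.Walk.support_reverse, List.mem_reverse]
    intro hmem
    have := mem_support_dist_le q₂ hmem
    omega
  have hp1 : (SimpleGraph.Walk.cons h1 q₁.reverse).IsPath :=
    SimpleGraph.Walk.IsPath.cons hq₁.reverse ha₁
  have hp2 : (SimpleGraph.Walk.cons h2 q₂.reverse).IsPath :=
    SimpleGraph.Walk.IsPath.cons hq₂.reverse ha₂
  have huniq := hT.IsAcyclic.path_unique
    ⟨SimpleGraph.Walk.cons h1 q₁.reverse, hp1⟩ ⟨SimpleGraph.Walk.cons h2 q₂.reverse, hp2⟩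
  have := congrArg (fun r : T.Path a u => (r : T.Walk a u).getVert 1) huniq
  simpa [SimpleGraph.Walk.getVert_cons] using this

lemma descend {V : Type*} {T : SimpleGraph V} (hT : T.IsTree) (u : V) :
    ∀ r : ℕ, ∀ x y p : V, T.dist x y = r → x ≠ y → T.dist u y ≤ T.dist u x →
      T.Adj x p → T.dist u p + 1 = T.dist u x → T.dist p y + 1 = r := by
  intro r
  induction r using Nat.strong_induction_on with
  | _ r IH =>
    intro x y p hdxy hxy hle hadj hp
    have hconn := hT.isConnected
    obtain ⟨w, hwp, hwl⟩ := hconn.exists_path_of_dist x y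
    have hpos : 0 < T.dist x y := hconn.pos_dist_of_ne hxy
    have hnn : ¬ w.Nil := by rw [SimpleGraph.Walk.nil_iff_length_eq]; omega
    obtain ⟨c, hadjc, w', hw'⟩ := SimpleGraph.Walk.not_nil_iff.mp hnn
    have hlw' : w'.length + 1 = r := by
      have := congrArg SimpleGraph.Walk.length hw'
      simp only [SimpleGraph.Walk.length_cons] at this
      omega
    have hdcy : T.dist c y + 1 = r := by
      have h1 : T.dist c y ≤ w'.length := SimpleGraph.dist_le w'
      have h2 : T.dist x y ≤ T.dist x c + T.dist c y := hconn.dist_triangle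
      have h3 : T.dist x c ≤ 1 := by
        have := SimpleGraph.dist_le (SimpleGraph.Walk.cons hadjc SimpleGraph.Walk.nil)
        simpa using this
      omega
    have hne := adj_layer_ne hT u hadjc
    have htri1 : T.dist u x ≤ T.dist u c + 1 := by
      have h1 := hconn.dist_triangle (u := u) (v := c) (w := x)
      have h2 : T.dist c x ≤ 1 := by
        have := SimpleGraph.dist_le (SimpleGraph.Walk.cons hadjc.symm SimpleGraph.Walk.nil)
        simpa using this
      omega
    have htri2 : T.dist u c ≤ T.dist u x + 1 := by
      have h1 := hconn.dist_triangle (u := u) (v := x) (w := c)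
      have h2 : T.dist x c ≤ 1 := by
        have := SimpleGraph.dist_le (SimpleGraph.Walk.cons hadjc SimpleGraph.Walk.nil)
        simpa using this
      omega
    rcases lt_or_gt_of_ne hne with hgt | hlt
    · -- dist u x < dist u c, so c is a child; x is parent of c
      by_cases hcy : c = y
      · subst hcy; omega
      · have hxpar : T.dist u x + 1 = T.dist u c := by omega
        have := IH (r - 1) (by omega) c y x (by omega) hcy (by omega) hadjc.symm hxpar
        omega
    · -- dist u c < dist u x: c is the parent of x, so c = p
      have hcpar : T.dist u c + 1 = T.dist u x := by omega
      have hcp : c = p := parent_unique hT u hadjc hadj hcpar hp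
      subst hcp
      omega

lemma exists_child {V : Type*} {T : SimpleGraph V} (hT : T.IsTree) (u : V) {a : V}
    (ha : a ≠ u) (hnl : (T.neighborSet a).ncard ≠ 1) :
    ∃ z, T.Adj a z ∧ T.dist u z = T.dist u a + 1 := by
  obtain ⟨p, hadj, hpar⟩ := exists_parent hT u ha
  have : ∃ z ∈ T.neighborSet a, z ≠ p := by
    by_contra hcon
    push_neg at hcon
    have : T.neighborSet a = {p} := by
      apply Set.eq_singleton_iff_unique_mem.mpr
      exact ⟨hadj, hcon⟩
    rw [this] at hnl
    simp at hnl
  obtain ⟨z, hz, hzp⟩ := this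
  have hzadj : T.Adj a z := hz
  have hne := adj_layer_ne hT u hzadj
  have htri1 : T.dist u a ≤ T.dist u z + 1 := by
    have h1 := hT.isConnected.dist_triangle (u := u) (v := z) (w := a)
    have h2 : T.dist z a ≤ 1 := by
      have := SimpleGraph.dist_le (SimpleGraph.Walk.cons hzadj.symm SimpleGraph.Walk.nil)
      simpa using this
    omega
  have htri2 : T.dist u z ≤ T.dist u a + 1 := by
    have h1 := hT.isConnected.dist_triangle (u := u) (v := a) (w := z)
    have h2 : T.dist a z ≤ 1 := by
      have := SimpleGraph.dist_le (SimpleGraph.Walk.cons hzadj SimpleGraph.Walk.nil)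
      simpa using this
    omega
  refine ⟨z, hzadj, ?_⟩
  rcases lt_or_gt_of_ne hne with hgt | hlt
  · omega
  · exfalso
    have : T.dist u z + 1 = T.dist u a := by omega
    exact hzp (parent_unique hT u hzadj hadj this hpar)

end aux

section removal

lemma exists_geodesic_avoid {V : Type*} {T : SimpleGraph V} (hT : T.IsTree) {u n : V}
    (hn : T.neighborSet u = {n}) {a b : V} (ha : a ≠ u) (hb : b ≠ u) :
    ∃ w : T.Walk a b, w.length = T.dist a b ∧ u ∉ w.support := by
  classical
  obtain ⟨w, hwp, hwl⟩ := hT.isConnected.exists_path_of_dist a b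
  by_cases hus : u ∈ w.support
  · exfalso
    have hlen : (w.takeUntil u hus).length + (w.dropUntil u hus).length = T.dist a b := by
      have := congrArg SimpleGraph.Walk.length (w.take_spec hus)
      rw [SimpleGraph.Walk.length_append] at this
      omega
    have hl1 : (w.takeUntil u hus).length ≠ 0 := fun h0 =>
      ha (SimpleGraph.Walk.eq_of_length_eq_zero h0)
    have hl2 : (w.dropUntil u hus).length ≠ 0 := fun h0 =>
      hb (SimpleGraph.Walk.eq_of_length_eq_zero h0).symm
    have hnn1 : ¬ (w.takeUntil u hus).reverse.Nil := by
      rw [SimpleGraph.Walk.nil_iff_length_eq, SimpleGraph.Walk.length_reverse]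
      exact hl1
    have hnn2 : ¬ (w.dropUntil u hus).Nil := by
      rw [SimpleGraph.Walk.nil_iff_length_eq]
      exact hl2
    obtain ⟨x, hadjx, s₁, hs₁⟩ := SimpleGraph.Walk.not_nil_iff.mp hnn1
    obtain ⟨y, hadjy, s₂, hs₂⟩ := SimpleGraph.Walk.not_nil_iff.mp hnn2
    have hx : x = n := by
      have hmem : x ∈ T.neighborSet u := hadjx
      rw [hn] at hmem
      exact hmem
    have hy : y = n := by
      have hmem : y ∈ T.neighborSet u := hadjy
      rw [hn] at hmem
      exact hmem
    subst hx
    subst hy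
    have hls1 : s₁.length + 1 = (w.takeUntil u hus).length := by
      have := congrArg SimpleGraph.Walk.length hs₁
      rw [SimpleGraph.Walk.length_reverse] at this
      simp only [SimpleGraph.Walk.length_cons] at this
      omega
    have hls2 : s₂.length + 1 = (w.dropUntil u hus).length := by
      have := congrArg SimpleGraph.Walk.length hs₂
      simp only [SimpleGraph.Walk.length_cons] at this
      omega
    have hshort := SimpleGraph.dist_le (s₁.reverse.append s₂)
    rw [SimpleGraph.Walk.length_append, SimpleGraph.Walk.length_reverse] at hshort
    omega
  · exact ⟨w, hwl, hus⟩

lemma walk_to_induce {V : Type*} {T : SimpleGraph V} {s : Set V} :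
    ∀ {a b : V} (w : T.Walk a b) (ha : a ∈ s) (hb : b ∈ s),
      (∀ x ∈ w.support, x ∈ s) →
      ∃ w' : (T.induce s).Walk ⟨a, ha⟩ ⟨b, hb⟩, w'.length = w.length := by
  intro a b w
  induction w with
  | nil =>
    intro ha hb _
    exact ⟨SimpleGraph.Walk.nil, rfl⟩
  | @cons a c b hadj q IH =>
    intro ha hb hs
    have hc : c ∈ s := hs c (by simp [SimpleGraph.Walk.support_cons])
    obtain ⟨q', hq'⟩ := IH hc hb (fun x hx => hs x (by simp [SimpleGraph.Walk.support_cons, hx]))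
    have hadj' : (T.induce s).Adj ⟨a, ha⟩ ⟨c, hc⟩ := hadj
    exact ⟨SimpleGraph.Walk.cons hadj' q', by simp [hq']⟩

lemma dist_induce_eq {V : Type*} {T : SimpleGraph V} (hT : T.IsTree) {u n : V}
    (hn : T.neighborSet u = {n}) {a b : V} (ha : a ≠ u) (hb : b ≠ u) :
    (T.induce {v | v ≠ u}).dist ⟨a, ha⟩ ⟨b, hb⟩ = T.dist a b := by
  obtain ⟨w, hwl, hwu⟩ := exists_geodesic_avoid hT hn ha hb
  have hsup : ∀ x ∈ w.support, x ∈ {v | v ≠ u} := fun x hx hxu => hwu (hxu ▸ hx)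
  obtain ⟨w', hw'⟩ := walk_to_induce w ha hb hsup
  apply le_antisymm
  · have := SimpleGraph.dist_le w'
    omega
  · have hreach : (T.induce {v | v ≠ u}).Reachable ⟨a, ha⟩ ⟨b, hb⟩ := ⟨w'⟩
    obtain ⟨p, hp⟩ := hreach.exists_walk_length_eq_dist
    have hmap := SimpleGraph.dist_le
      (p.map (SimpleGraph.Embedding.induce {v | v ≠ u}).toHom)
    rw [SimpleGraph.Walk.length_map, hp] at hmap
    exact hmap

end removal

lemma exists_special {V : Type} [Fintype V] (k : ℕ) (hk : 2 ≤ k) {T : SimpleGraph V}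
    (hT : T.IsTree) {u : V}
    (h : ∀ v, IsLeaf T v → v ∈ ball T (k + 1) u \ {u} → False) :
    ∃ Js : Set V, MaxDkIndep T k Js ∧ u ∈ Js ∧ ∀ j ∈ Js, j ≠ u → k + 2 ≤ T.dist u j := by
  classical
  obtain ⟨M, hMmem, hMmax⟩ := exists_maximal_family
    {X : Set V | DkIndep T k X ∧ X ⊆ {x | T.dist u x = k + 2}}
    ⟨∅, fun a ha => (Set.notMem_empty a ha).elim, Set.empty_subset _⟩
  obtain ⟨hMi, hML⟩ := hMmem
  obtain ⟨M', hM'mem, hM'max⟩ := exists_maximal_family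
    {X : Set V | DkIndep T k X ∧ X ⊆ {x | k + 2 ≤ T.dist u x} ∧ M ⊆ X}
    ⟨M, hMi, fun x hx => ge_of_eq (hML hx), subset_rfl⟩
  obtain ⟨hM'i, hM'sub, hMM'⟩ := hM'mem
  have hlayer : ∀ j ∈ M', k + 2 ≤ T.dist u j := fun j hj => hM'sub hj
  have hJsIndep : DkIndep T k (insert u M') := by
    intro a ha b hb hab
    rcases ha with rfl | ha
    · rcases hb with rfl | hb
      · exact absurd rfl hab
      · have := hlayer b hb; omega
    · rcases hb with rfl | hb
      · have := hlayer a ha; rw [SimpleGraph.dist_comm]; omega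
      · exact hM'i ha hb hab
  refine ⟨insert u M', ⟨hJsIndep, ?_⟩, Set.mem_insert _ _, ?_⟩
  · intro J'' hJ'' hsub
    apply Set.Subset.antisymm _ hsub
    intro v hv
    by_contra hvJs
    have hvu : v ≠ u := fun he => hvJs (he ▸ Set.mem_insert _ _)
    have hvM' : v ∉ M' := fun hm => hvJs (Set.mem_insert_of_mem _ hm)
    have hdv : k + 1 ≤ T.dist u v := hJ'' (hsub (Set.mem_insert _ _)) hv (Ne.symm hvu)
    by_cases hcase : T.dist u v = k + 1
    · -- v is at layer k+1 : not a leaf, has a child z at layer k+2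
      have hvnl : ¬ IsLeaf T v := fun hl => h v hl ⟨by simp [ball, hcase], by simp [hvu]⟩
      obtain ⟨z, hadjz, hzl⟩ := exists_child hT u hvu hvnl
      rw [hcase] at hzl
      by_cases hzM : z ∈ M
      · have hzJ : z ∈ J'' := hsub (Set.mem_insert_of_mem _ (hMM' hzM))
        have hge := hJ'' hv hzJ hadjz.ne
        have hd1 : T.dist v z = 1 := SimpleGraph.dist_eq_one_iff_adj.mpr hadjz
        omega
      · have hnotind : ¬ DkIndep T k (insert z M) := by
          intro hind
          have hXsub : insert z M ⊆ {x | T.dist u x = k + 2} := by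
            intro x hx
            rcases hx with rfl | hx
            · exact hzl
            · exact hML hx
          have := hMmax (insert z M) ⟨hind, hXsub⟩ (Set.subset_insert _ _)
          exact hzM (this ▸ Set.mem_insert _ _)
        simp only [DkIndep] at hnotind
        push_neg at hnotind
        obtain ⟨a, ha, b, hb, hab, hdist⟩ := hnotind
        have hkey : ∃ m ∈ M, m ≠ z ∧ T.dist z m ≤ k := by
          rcases ha with rfl | haM
          · rcases hb with rfl | hbM
            · exact absurd rfl hab
            · exact ⟨b, hbM, Ne.symm hab, by omega⟩
          · rcases hb with rfl | hbM
            · refine ⟨a, haM, hab, ?_⟩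
              rw [SimpleGraph.dist_comm]; omega
            · exact absurd (hMi haM hbM hab) (by omega)
        obtain ⟨m, hmM, hmz, hdzm⟩ := hkey
        have hml : T.dist u m = k + 2 := hML hmM
        have hdes := descend hT u (T.dist z m) z m v rfl (Ne.symm hmz)
          (by omega) hadjz.symm (by omega)
        have hmJ : m ∈ J'' := hsub (Set.mem_insert_of_mem _ (hMM' hmM))
        have hvm : v ≠ m := fun he => by rw [he, hml] at hcase; omega
        have := hJ'' hv hmJ hvm
        omega
    · -- v is at layer ≥ k+2, contradicting maximality of M'
      have hvlayer : k + 2 ≤ T.dist u v := by omega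
      have hXmem : insert v M' ∈
          {X : Set V | DkIndep T k X ∧ X ⊆ {x | k + 2 ≤ T.dist u x} ∧ M ⊆ X} := by
        refine ⟨dk_mono hJ'' ?_, ?_, hMM'.trans (Set.subset_insert _ _)⟩
        · intro x hx
          rcases hx with rfl | hx
          · exact hv
          · exact hsub (Set.mem_insert_of_mem _ hx)
        · intro x hx
          rcases hx with rfl | hx
          · exact hvlayer
          · exact hlayer x hx
      have := hM'max _ hXmem (Set.subset_insert _ _)
      exact hvM' (this ▸ Set.mem_insert _ _)
  · intro j hj hju
    rcases hj with rfl | hj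
    · exact absurd rfl hju
    · exact hlayer j hj

/-- If `u` is a leaf of the tree `T` and no leaf of `T` lies in
`N_{k+1}[u] ∖ {u}` (with `k ≥ 2`), then `mdi_k(T ∖ u) < mdi_k(T)`. -/
theorem stmt_4 {V : Type} [Fintype V] (k : ℕ) (hk : 2 ≤ k) (T : SimpleGraph V)
    (hT : T.IsTree) (u : V) (hu : IsLeaf T u)
    (h : ∀ v, IsLeaf T v → v ∈ ball T (k + 1) u \ {u} → False) :
    mdi (T.induce {v | v ≠ u}) k < mdi T k := by
  classical
  obtain ⟨n, hn⟩ := Set.ncard_eq_one.mp hu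
  have hnadj : T.Adj u n := by
    have : n ∈ T.neighborSet u := by rw [hn]; exact Set.mem_singleton _
    exact this
  have hnu : n ≠ u := hnadj.ne'
  have hdun : T.dist u n = 1 := SimpleGraph.dist_eq_one_iff_adj.mpr hnadj
  have hdist : ∀ a b : ↥{v : V | v ≠ u}, (T.induce {v : V | v ≠ u}).dist a b = T.dist ↑a ↑b :=
    fun a b => dist_induce_eq hT hn a.2 b.2
  set A : Set (Set ↥{v : V | v ≠ u}) :=
    {J | MaxDkIndep (T.induce {v : V | v ≠ u}) k J} with hA
  set B : Set (Set V) := {J | MaxDkIndep T k J} with hB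
  set F : Set ↥{v : V | v ≠ u} → Set V := fun J =>
    if ∀ j ∈ J, k + 1 ≤ T.dist u ↑j then insert u (Subtype.val '' J) else Subtype.val '' J
    with hF
  have hFdef : ∀ J, F J = if ∀ j ∈ J, k + 1 ≤ T.dist u ↑j
      then insert u (Subtype.val '' J) else Subtype.val '' J := fun J => rfl
  have hvalne : ∀ (J : Set ↥{v : V | v ≠ u}) (x : V), x ∈ Subtype.val '' J → x ≠ u := by
    rintro J x ⟨j, -, rfl⟩; exact j.2
  have hindT : ∀ J, DkIndep (T.induce {v : V | v ≠ u}) k J → DkIndep T k (Subtype.val '' J) := by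
    rintro J hJi a ⟨j₁, hj₁, rfl⟩ b ⟨j₂, hj₂, rfl⟩ hab
    have hne : j₁ ≠ j₂ := fun he => hab (congrArg _ he)
    have := hJi hj₁ hj₂ hne
    rwa [hdist] at this
  -- key step: an undominated vertex can be added to a maximal set
  have hstep : ∀ J, MaxDkIndep (T.induce {v : V | v ≠ u}) k J → ∀ (v : V) (hv : v ∈ {x : V | x ≠ u}),
      (∀ j ∈ J, (⟨v, hv⟩ : ↥{x : V | x ≠ u}) ≠ j → k + 1 ≤ T.dist v ↑j) →
      (⟨v, hv⟩ : ↥{x : V | x ≠ u}) ∈ J := by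
    rintro J ⟨hJi, hJm⟩ v hv hfar
    have hind : DkIndep (T.induce {x : V | x ≠ u}) k (insert ⟨v, hv⟩ J) := by
      intro a ha b hb hab
      rw [hdist]
      rcases ha with rfl | ha
      · rcases hb with rfl | hb
        · exact absurd rfl hab
        · exact hfar b hb hab
      · rcases hb with rfl | hb
        · rw [SimpleGraph.dist_comm]
          exact hfar a ha (Ne.symm hab)
        · have := hJi ha hb hab
          rwa [hdist] at this
    have := hJm _ hind (Set.subset_insert _ _)
    exact this ▸ Set.mem_insert _ _
  -- F maps A into B
  have hFmem : ∀ J ∈ A, F J ∈ B := by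
    intro J hJA
    obtain ⟨hJi, hJm⟩ := hJA
    rw [hFdef J]
    by_cases hC : ∀ j ∈ J, k + 1 ≤ T.dist u ↑j
    · rw [if_pos hC]
      constructor
      · -- independence
        intro a ha b hb hab
        rcases ha with rfl | ha
        · rcases hb with rfl | hb
          · exact absurd rfl hab
          · obtain ⟨j, hj, rfl⟩ := hb
            exact hC j hj
        · rcases hb with rfl | hb
          · obtain ⟨j, hj, rfl⟩ := ha
            rw [SimpleGraph.dist_comm]
            exact hC j hj
          · exact hindT J hJi ha hb hab
      · intro J'' hJ''i hsub
        apply Set.Subset.antisymm _ hsub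
        intro v hv
        by_contra hvmem
        have hvu : v ≠ u := fun he => hvmem (by rw [he]; exact Set.mem_insert _ _)
        have hvim : v ∉ Subtype.val '' J := fun hm => hvmem (Set.mem_insert_of_mem _ hm)
        have : (⟨v, hvu⟩ : ↥{x : V | x ≠ u}) ∈ J := by
          apply hstep J ⟨hJi, hJm⟩ v hvu
          intro j hj hne
          exact hJ''i hv (hsub (Set.mem_insert_of_mem _ ⟨j, hj, rfl⟩))
            (fun he => hne (Subtype.ext he))
        exact hvim ⟨_, this, rfl⟩
    · rw [if_neg hC]
      push_neg at hC
      obtain ⟨j₀, hj₀, hdj₀⟩ := hC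
      constructor
      · exact hindT J hJi
      · intro J'' hJ''i hsub
        apply Set.Subset.antisymm _ hsub
        intro v hv
        by_contra hvmem
        have hvu : v ≠ u := by
          intro he
          have h1 := hJ''i hv (hsub ⟨j₀, hj₀, rfl⟩)
            (fun h2 => j₀.2 (h2.symm.trans he))
          rw [he] at h1
          omega
        have : (⟨v, hvu⟩ : ↥{x : V | x ≠ u}) ∈ J := by
          apply hstep J ⟨hJi, hJm⟩ v hvu
          intro j hj hne
          exact hJ''i hv (hsub ⟨j, hj, rfl⟩) (fun he => hne (Subtype.ext he))
        exact hvmem ⟨_, this, rfl⟩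
  -- injectivity of F on A
  have hinj : Set.InjOn F A := by
    intro J₁ _ J₂ _ hFeq
    rw [hFdef J₁, hFdef J₂] at hFeq
    have himval : Subtype.val '' J₁ = Subtype.val '' J₂ → J₁ = J₂ := by
      intro he
      have := Set.image_injective.mpr (Subtype.val_injective) he
      exact this
    by_cases hC₁ : ∀ j ∈ J₁, k + 1 ≤ T.dist u ↑j <;>
      by_cases hC₂ : ∀ j ∈ J₂, k + 1 ≤ T.dist u ↑j
    · rw [if_pos hC₁, if_pos hC₂] at hFeq
      apply himval
      ext x
      constructor
      · intro hx
        have : x ∈ insert u (Subtype.val '' J₂) := hFeq ▸ Set.mem_insert_of_mem _ hx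
        rcases this with rfl | hx2
        · exact absurd rfl (hvalne J₁ x hx)
        · exact hx2
      · intro hx
        have : x ∈ insert u (Subtype.val '' J₁) := hFeq ▸ Set.mem_insert_of_mem _ hx
        rcases this with rfl | hx2
        · exact absurd rfl (hvalne J₂ x hx)
        · exact hx2
    · rw [if_pos hC₁, if_neg hC₂] at hFeq
      exact absurd (hvalne J₂ u (hFeq ▸ Set.mem_insert _ _)) (by simp)
    · rw [if_neg hC₁, if_pos hC₂] at hFeq
      exact absurd (hvalne J₁ u (hFeq.symm ▸ Set.mem_insert _ _)) (by simp)
    · rw [if_neg hC₁, if_neg hC₂] at hFeq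
      exact himval hFeq
  -- the special maximal set
  obtain ⟨Js, hJsB, hJsu, hJslayer⟩ := exists_special k hk hT h
  have hJsnot : Js ∉ F '' A := by
    rintro ⟨J, hJA, hFJ⟩
    rw [hFdef J] at hFJ
    by_cases hC : ∀ j ∈ J, k + 1 ≤ T.dist u ↑j
    · rw [if_pos hC] at hFJ
      have hnmem : (⟨n, hnu⟩ : ↥{x : V | x ≠ u}) ∈ J := by
        apply hstep J hJA n hnu
        intro j hj _
        have hjJs : (↑j : V) ∈ Js := hFJ ▸ Set.mem_insert_of_mem _ ⟨j, hj, rfl⟩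
        have hlay : k + 2 ≤ T.dist u ↑j := hJslayer _ hjJs j.2
        have htri : T.dist u ↑j ≤ T.dist u n + T.dist n ↑j := hT.isConnected.dist_triangle
        omega
      have hnJs : n ∈ Js := hFJ ▸ Set.mem_insert_of_mem _ ⟨_, hnmem, rfl⟩
      have := hJslayer n hnJs hnu
      omega
    · rw [if_neg hC] at hFJ
      exact hvalne J u (hFJ ▸ hJsu) rfl
  -- conclude by counting
  have hFsub : F '' A ⊆ B := by
    rintro _ ⟨J, hJA, rfl⟩
    exact hFmem J hJA
  have hss : F '' A ⊂ B := (Set.ssubset_iff_of_subset hFsub).mpr ⟨Js, hJsB, hJsnot⟩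
  have hcard : (F '' A).ncard < B.ncard := Set.ncard_lt_ncard hss (Set.toFinite B)
  rw [Set.ncard_image_of_injOn hinj] at hcard
  exact hcard
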